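/- Let M be a smooth finite-dimensional manifold, x ∈ M, and s : M → M a smooth diffeomorphism with s(x) = x whose differential at x equals −id on T_xM. Then for all smooth vector fields X, Y on M, (1/2)[X, Y + s_*Y]_x − (1/2)[Y, X + s_*X]_x = [X, Y]_x; that is, the connection defined by (∇_X Y)_x := (1/2)[X, Y + s_*Y]_x is torsion-free. -/

import Mathlib

open scoped Manifold
local notation "∞" => (⊤ : ℕ∞)

/-- The pushforward of a vector field (viewed, as is standard, as a derivation of the
algebra of smooth functions) along a diffeomorphism `s` with smooth inverse `sinv`:
`(s_*Y) f = (Y (f ∘ s)) ∘ s⁻¹`. -/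
noncomputable def pushforwardVF
    {E : Type*} [NormedAddCommGroup E] [NormedSpace ℝ E]
    {H : Type*} [TopologicalSpace H] {I : ModelWithCorners ℝ E H}
    {M : Type*} [TopologicalSpace M] [ChartedSpace H M]
    (s sinv : C^∞⟮I, M; I, M⟯) (hs : ∀ z : M, s (sinv z) = z)
    (Y : Derivation ℝ C^∞⟮I, M; ℝ⟯ C^∞⟮I, M; ℝ⟯) :
    Derivation ℝ C^∞⟮I, M; ℝ⟯ C^∞⟮I, M; ℝ⟯ :=
  Derivation.mk'
    { toFun := fun f => (Y (f.comp s)).comp sinv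
      map_add' := fun f g => by
        show (Y ((f + g).comp s)).comp sinv
            = (Y (f.comp s)).comp sinv + (Y (g.comp s)).comp sinv
        rw [ContMDiffMap.add_comp, map_add, ContMDiffMap.add_comp]
      map_smul' := fun c f => by
        show (Y ((c • f).comp s)).comp sinv = c • (Y (f.comp s)).comp sinv
        rw [ContMDiffMap.smul_comp, Derivation.map_smul, ContMDiffMap.smul_comp] }
    (fun f g => by
      show (Y ((f * g).comp s)).comp sinv
          = f • (Y (g.comp s)).comp sinv + g • (Y (f.comp s)).comp sinv
      rw [ContMDiffMap.mul_comp, Derivation.leibniz]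
      ext z
      simp [hs z])

/-- (Torsion-free part of Proposition 1.3.) Let `M` be a smooth
finite-dimensional manifold, `x ∈ M`, and `s` a smooth diffeomorphism of `M` (with
smooth inverse `sinv`) such that `s x = x` and whose differential at `x` is `-id`
on `T_xM`. Then for all smooth vector fields `X, Y`,
`(1/2)[X, Y + s_*Y]_x - (1/2)[Y, X + s_*X]_x = [X, Y]_x`. -/
theorem statement2
    {E : Type*} [NormedAddCommGroup E] [NormedSpace ℝ E] [FiniteDimensional ℝ E]
    {H : Type*} [TopologicalSpace H] {I : ModelWithCorners ℝ E H} [I.Boundaryless]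
    {M : Type*} [TopologicalSpace M] [ChartedSpace H M] [IsManifold I ∞ M]
    [T2Space M]
    (x : M) (s sinv : C^∞⟮I, M; I, M⟯)
    (hinv : ∀ z : M, s (sinv z) = z) (hinv' : ∀ z : M, sinv (s z) = z)
    (hsx : s x = x)
    (hds : ∀ v : PointDerivation I x, 𝒅ₕ hsx v = -v) :
    ∀ X Y : Derivation ℝ C^∞⟮I, M; ℝ⟯ C^∞⟮I, M; ℝ⟯,
      (1/2 : ℝ) • Derivation.evalAt x ⁅X, Y + pushforwardVF s sinv hinv Y⁆
        - (1/2 : ℝ) • Derivation.evalAt x ⁅Y, X + pushforwardVF s sinv hinv X⁆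
        = Derivation.evalAt x ⁅X, Y⁆ := by
  intro X Y
  have hsinvx : sinv x = x := by have h := hinv' x; rwa [hsx] at h
  have key : ∀ (Z : Derivation ℝ C^∞⟮I, M; ℝ⟯ C^∞⟮I, M; ℝ⟯) (g : C^∞⟮I, M; ℝ⟯),
      (Z (g.comp s)) x = -((Z g) x) := by
    intro Z g
    have h := hds (Derivation.evalAt x Z)
    have h2 := congrArg (fun (d : PointDerivation I x) => d g) h
    simp at h2; exact h2
  have hpf : ∀ (Z : Derivation ℝ C^∞⟮I, M; ℝ⟯ C^∞⟮I, M; ℝ⟯) (g : C^∞⟮I, M; ℝ⟯),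
      (pushforwardVF s sinv hinv Z) g = (Z (g.comp s)).comp sinv := fun _ _ => rfl
  have keyA : ∀ (Z : Derivation ℝ C^∞⟮I, M; ℝ⟯ C^∞⟮I, M; ℝ⟯) (g : C^∞⟮I, M; ℝ⟯),
      ((pushforwardVF s sinv hinv Z) g) x = -((Z g) x) := by
    intro Z g
    rw [hpf]
    show (Z (g.comp s)) (sinv x) = -((Z g) x)
    rw [hsinvx, key]
  have keyB : ∀ (Z W : Derivation ℝ C^∞⟮I, M; ℝ⟯ C^∞⟮I, M; ℝ⟯) (g : C^∞⟮I, M; ℝ⟯),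
      (Z ((pushforwardVF s sinv hinv W) g)) x = -((Z (W (g.comp s))) x) := by
    intro Z W g
    have hc : ((pushforwardVF s sinv hinv W) g).comp s = W (g.comp s) := by
      rw [hpf]; ext z; simp [hinv' z]
    have h := key Z ((pushforwardVF s sinv hinv W) g)
    rw [hc] at h
    linarith [h]
  ext f
  set g : C^∞⟮I, M; ℝ⟯ := f with hg
  have hXYs : (X (Y (g.comp s))) x - (Y (X (g.comp s))) x
      = -((X (Y g)) x - (Y (X g)) x) := by
    have h := key ⁅X, Y⁆ g
    simp only [Derivation.commutator_apply, ContMDiffMap.coe_sub, Pi.sub_apply] at h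
    linarith [h]
  have b1 : ((⁅X, Y + pushforwardVF s sinv hinv Y⁆ :
      Derivation ℝ C^∞⟮I, M; ℝ⟯ C^∞⟮I, M; ℝ⟯) g) x
      = (X (Y g)) x - (X (Y (g.comp s))) x := by
    simp only [Derivation.commutator_apply, Derivation.add_apply, map_add,
      ContMDiffMap.coe_add, ContMDiffMap.coe_sub, Pi.add_apply, Pi.sub_apply]
    rw [keyA Y (X g), keyB X Y g]
    ring
  have b2 : ((⁅Y, X + pushforwardVF s sinv hinv X⁆ :
      Derivation ℝ C^∞⟮I, M; ℝ⟯ C^∞⟮I, M; ℝ⟯) g) x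
      = (Y (X g)) x - (Y (X (g.comp s))) x := by
    simp only [Derivation.commutator_apply, Derivation.add_apply, map_add,
      ContMDiffMap.coe_add, ContMDiffMap.coe_sub, Pi.add_apply, Pi.sub_apply]
    rw [keyA X (Y g), keyB Y X g]
    ring
  have lhs : ((1/2 : ℝ) • Derivation.evalAt x ⁅X, Y + pushforwardVF s sinv hinv Y⁆
        - (1/2 : ℝ) • Derivation.evalAt x ⁅Y, X + pushforwardVF s sinv hinv X⁆) f
      = (1/2 : ℝ) * (((⁅X, Y + pushforwardVF s sinv hinv Y⁆ :
            Derivation ℝ C^∞⟮I, M; ℝ⟯ C^∞⟮I, M; ℝ⟯) g) x)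
        - (1/2 : ℝ) * (((⁅Y, X + pushforwardVF s sinv hinv X⁆ :
            Derivation ℝ C^∞⟮I, M; ℝ⟯ C^∞⟮I, M; ℝ⟯) g) x) := by
    simp only [Derivation.sub_apply, Derivation.smul_apply, smul_eq_mul]
    rfl
  have rhs : (Derivation.evalAt x ⁅X, Y⁆) f
      = (X (Y g)) x - (Y (X g)) x := by
    show ((⁅X, Y⁆ : Derivation ℝ C^∞⟮I, M; ℝ⟯ C^∞⟮I, M; ℝ⟯) g) x = _
    simp only [Derivation.commutator_apply, ContMDiffMap.coe_sub, Pi.sub_apply]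
  rw [lhs, rhs, b1, b2]
  linarith [hXYs]
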